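/- arXiv:1407.3039 — 2 statements merged into one kernel-verified Lean document; each statement's English description precedes it below -/
import Mathlib

section
/- Let (Ω, H, E) be a nonlinear expectation space with n > 1 (E is monotone and constant preserving). If the n-dimensional Jensen inequality holds — i.e., for every convex h : ℝⁿ → ℝ and X₁, ..., Xₙ ∈ H with h(X₁,...,Xₙ) ∈ H one has E[h(X₁,...,Xₙ)] ≥ h(E[X₁],...,E[Xₙ]) — then E is linear: E[λX + γY] = λE[X] + γE[Y] for all λ, γ ∈ ℝ and X, Y ∈ H. -/
/-- For `n > 1`, if a monotone, constant-preserving nonlinear expectation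
satisfies the `n`-dimensional Jensen inequality, then it is linear. -/
theorem jensen_implies_linear
    {Ω : Type*} (n : ℕ) (hn : 1 < n)
    (H : Submodule ℝ (Ω → ℝ)) (E : (Ω → ℝ) → ℝ)
    (hconst_mem : ∀ c : ℝ, (fun _ : Ω => c) ∈ H)
    (hmono : ∀ X Y : Ω → ℝ, X ∈ H → Y ∈ H → (∀ ω, Y ω ≤ X ω) → E Y ≤ E X)
    (hconst : ∀ c : ℝ, E (fun _ : Ω => c) = c)
    (hjensen : ∀ h : (Fin n → ℝ) → ℝ, ConvexOn ℝ Set.univ h →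
      ∀ X : Fin n → (Ω → ℝ), (∀ i, X i ∈ H) →
        (fun ω => h (fun i => X i ω)) ∈ H →
        E (fun ω => h (fun i => X i ω)) ≥ h (fun i => E (X i))) :
    ∀ X Y : Ω → ℝ, X ∈ H → Y ∈ H → ∀ l g : ℝ,
      E (fun ω => l * X ω + g * Y ω) = l * E X + g * E Y := by
  haveI : NeZero n := ⟨by omega⟩
  have key : ∀ a b : ℝ, ∀ U V : Ω → ℝ, U ∈ H → V ∈ H →
      a * E U + b * E V ≤ E (fun ω => a * U ω + b * V ω) := by
    intro a b U V hU hV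
    set h : (Fin n → ℝ) → ℝ := fun x => a * x 0 + b * x 1 with hh
    have hconv : ConvexOn ℝ Set.univ h := by
      refine ⟨convex_univ, ?_⟩
      intro x _ y _ p q hp hq hpq
      simp only [hh, Pi.add_apply, Pi.smul_apply, smul_eq_mul]
      apply le_of_eq; ring
    set Xv : Fin n → Ω → ℝ := fun i => if i = 0 then U else if i = 1 then V else 0 with hXv
    have h01 : (1 : Fin n) ≠ 0 := by
      have : ((1 : Fin n) : ℕ) = 1 % n := rfl
      intro hcon
      have := congrArg (Fin.val) hcon
      simp [Nat.mod_eq_of_lt hn] at this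
    have hX0 : Xv 0 = U := by simp [hXv]
    have hX1 : Xv 1 = V := by simp [hXv, h01]
    have hmemv : ∀ i, Xv i ∈ H := by
      intro i
      by_cases h0 : i = 0
      · simp [hXv, h0, hU]
      · by_cases h1 : i = 1
        · simp [hXv, h0, h1, hV, h01]
        · simpa [hXv, h0, h1] using H.zero_mem
    have hcomp : (fun ω => h (fun i => Xv i ω)) = fun ω => a * U ω + b * V ω := by
      funext ω
      show a * Xv 0 ω + b * Xv 1 ω = a * U ω + b * V ω
      rw [hX0, hX1]
    have hmemH : (fun ω => h (fun i => Xv i ω)) ∈ H := by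
      rw [hcomp]
      exact H.add_mem (H.smul_mem a hU) (H.smul_mem b hV)
    have hJ := hjensen h hconv Xv hmemv hmemH
    rw [hcomp] at hJ
    have hrhs : h (fun i => E (Xv i)) = a * E U + b * E V := by
      show a * E (Xv 0) + b * E (Xv 1) = _
      rw [hX0, hX1]
    rw [hrhs] at hJ
    exact hJ
  intro X Y hX hY l g
  set W : Ω → ℝ := fun ω => l * X ω + g * Y ω with hW
  have hWmem : W ∈ H := by
    rw [hW]; exact H.add_mem (H.smul_mem l hX) (H.smul_mem g hY)
  set V : Ω → ℝ := fun ω => -(W ω) with hV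
  have hVmem : V ∈ H := H.neg_mem hWmem
  have k1 := key l g X Y hX hY
  have k2 := key (-l) (-g) X Y hX hY
  have e2 : (fun ω => -l * X ω + -g * Y ω) = V := by
    funext ω; simp [hV, hW]; ring
  rw [e2] at k2
  have k3 := key 1 1 W V hWmem hVmem
  have e3 : (fun ω => 1 * W ω + 1 * V ω) = (fun _ : Ω => (0:ℝ)) := by
    funext ω; simp [hV]
  rw [e3, hconst 0] at k3
  have k4 := key (-1) (-1) W V hWmem hVmem
  have e4 : (fun ω => -1 * W ω + -1 * V ω) = (fun _ : Ω => (0:ℝ)) := by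
    funext ω; simp [hV]
  rw [e4, hconst 0] at k4
  have hWgoal : E (fun ω => l * X ω + g * Y ω) = E W := rfl
  rw [hWgoal]
  linarith
end

section
/- Let G : S_d → ℝ be a sublinear, monotone function on the space S_d of d×d real symmetric matrices (G(A+B) ≤ G(A)+G(B), G(λA) = λG(λA) for λ ≥ 0, and A ≥ B in the Loewner order implies G(A) ≥ G(B)). Then there exists a bounded, closed, convex subset Γ of the nonnegative-definite symmetric matrices S_d⁺ such that G(A) = (1/2) sup_{γ ∈ Γ} tr(γA) for all A ∈ S_d. -/
open Matrix

section Aux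

variable {d : ℕ}

private lemma aux_isHermitian_of_isSymm {M : Matrix (Fin d) (Fin d) ℝ}
    (h : M.IsSymm) : M.IsHermitian := by
  rw [Matrix.IsHermitian, Matrix.conjTranspose_eq_transpose_of_trivial]
  exact h

private lemma aux_dot_eq_trace (γ A : Matrix (Fin d) (Fin d) ℝ) :
    (γ * A).trace = ∑ i, ∑ k, γ i k * A k i := by
  simp [Matrix.trace, Matrix.diag, Matrix.mul_apply]

private lemma aux_quad (γ : Matrix (Fin d) (Fin d) ℝ) (x : Fin d → ℝ) :
    dotProduct x (γ *ᵥ x) = ∑ i, ∑ k, γ i k * x k * x i := by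
  simp only [dotProduct, Matrix.mulVec, dotProduct, Finset.mul_sum]
  exact Finset.sum_congr rfl fun i _ => Finset.sum_congr rfl fun k _ => by ring

private lemma aux_stdBasis_mulVec (i j : Fin d) (x : Fin d → ℝ) :
    (Matrix.single i j (1:ℝ)) *ᵥ x = fun k => if k = i then x j else 0 := by
  funext k
  simp only [Matrix.mulVec, dotProduct, Matrix.single, Matrix.of_apply]
  by_cases h : k = i
  · subst h; simp
  · simp [fun l => show ¬(i = k ∧ j = l) from fun hh => h hh.1.symm, h]

private lemma aux_trace_mul_std (γ : Matrix (Fin d) (Fin d) ℝ) (i j : Fin d) :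
    (γ * Matrix.single i j (1:ℝ)).trace = γ j i := by
  rw [Matrix.trace]
  rw [Finset.sum_eq_single j]
  · simp
  · intro b _ hb
    simpa [Matrix.diag] using Matrix.mul_single_apply_of_ne (c := (1:ℝ)) (i := i) (j := j) (a := b) (b := b) (hbj := hb) (M := γ)
  · simp

private lemma aux_B_isSymm (i j : Fin d) :
    (Matrix.single i j (1:ℝ) + Matrix.single j i 1).IsSymm := by
  apply Matrix.IsSymm.ext
  intro a b
  simp only [Matrix.add_apply, Matrix.single, Matrix.of_apply]
  by_cases h1 : i = b <;> by_cases h2 : j = a <;> by_cases h3 : i = a <;> by_cases h4 : j = b <;>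
    simp [h1, h2, h3, h4, add_comm, and_comm]

private lemma aux_psd (i j : Fin d) (s : ℝ) (hs : s = 1 ∨ s = -1) :
    ((2:ℝ) • (1 : Matrix (Fin d) (Fin d) ℝ)
      - s • (Matrix.single i j 1 + Matrix.single j i 1)).PosSemidef := by
  set B : Matrix (Fin d) (Fin d) ℝ :=
    Matrix.single i j 1 + Matrix.single j i 1 with hB
  have hsym : ((2:ℝ) • (1 : Matrix (Fin d) (Fin d) ℝ) - s • B).IsSymm := by
    have h1 := (aux_B_isSymm i j).smul s
    rw [Matrix.IsSymm] at h1 ⊢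
    rw [Matrix.transpose_sub, Matrix.transpose_smul, Matrix.transpose_one, h1]
  refine Matrix.PosSemidef.of_dotProduct_mulVec_nonneg (aux_isHermitian_of_isSymm hsym) fun y => ?_
  have hmv : ((2:ℝ) • (1 : Matrix (Fin d) (Fin d) ℝ) - s • B) *ᵥ y
      = fun k => 2 * y k - (if k = i then s * y j else 0) - (if k = j then s * y i else 0) := by
    funext k
    rw [Matrix.sub_mulVec, Matrix.smul_mulVec, Matrix.smul_mulVec,
      Matrix.one_mulVec, hB, Matrix.add_mulVec, aux_stdBasis_mulVec, aux_stdBasis_mulVec]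
    simp only [Pi.sub_apply, Pi.smul_apply, Pi.add_apply, smul_eq_mul]
    by_cases h1 : k = i <;> by_cases h2 : k = j <;> simp [h1, h2] <;> split_ifs <;> ring
  rw [hmv]
  simp only [star_trivial, dotProduct]
  have hsum : ∑ k, y k * (2 * y k - (if k = i then s * y j else 0) - (if k = j then s * y i else 0))
      = 2 * (∑ k, y k ^ 2) - s * (y i * y j) - s * (y j * y i) := by
    simp only [mul_sub, Finset.sum_sub_distrib, mul_ite, mul_zero,
      Finset.sum_ite_eq', Finset.mem_univ, if_true]
    congr 1
    · congr 1
      · rw [Finset.mul_sum]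
        exact Finset.sum_congr rfl fun k _ => by ring
      · ring
    · ring
  rw [hsum]
  have h1 : y i ^ 2 ≤ ∑ k, y k ^ 2 :=
    Finset.single_le_sum (fun k _ => sq_nonneg (y k)) (Finset.mem_univ i)
  have h2 : y j ^ 2 ≤ ∑ k, y k ^ 2 :=
    Finset.single_le_sum (fun k _ => sq_nonneg (y k)) (Finset.mem_univ j)
  rcases hs with rfl | rfl <;> nlinarith [sq_nonneg (y i - y j), sq_nonneg (y i + y j)]

end Aux

/-- A sublinear, monotone function `G` on the symmetric `d × d` real matrices
is represented as `G(A) = (1/2) sup_{γ ∈ Γ} tr(γA)` for a bounded, closed,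
convex set `Γ` of nonnegative-definite symmetric matrices. -/
theorem sublinear_monotone_matrix_representation
    (d : ℕ) (G : Matrix (Fin d) (Fin d) ℝ → ℝ)
    (hsubadd : ∀ A B : Matrix (Fin d) (Fin d) ℝ, A.IsSymm → B.IsSymm →
      G (A + B) ≤ G A + G B)
    (hposhom : ∀ (l : ℝ), 0 ≤ l → ∀ A : Matrix (Fin d) (Fin d) ℝ, A.IsSymm →
      G (l • A) = l * G A)
    (hmono : ∀ A B : Matrix (Fin d) (Fin d) ℝ, A.IsSymm → B.IsSymm →
      (A - B).PosSemidef → G B ≤ G A) :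
    ∃ Γ : Set (Matrix (Fin d) (Fin d) ℝ),
      (∀ γ ∈ Γ, γ.IsSymm ∧ γ.PosSemidef) ∧
      (∃ C : ℝ, ∀ γ ∈ Γ, ∀ i j, |γ i j| ≤ C) ∧
      IsClosed Γ ∧ Convex ℝ Γ ∧
      ∀ A : Matrix (Fin d) (Fin d) ℝ, A.IsSymm →
        G A = (1 / 2) * sSup ((fun γ : Matrix (Fin d) (Fin d) ℝ =>
          (γ * A).trace) '' Γ) := by
  classical
  have h00 : (0 : Matrix (Fin d) (Fin d) ℝ).IsSymm := by simp [Matrix.IsSymm]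
  have hG0 : G 0 = 0 := by
    have := hposhom 0 le_rfl 0 h00
    simpa using this
  -- the symmetrization
  set N : Matrix (Fin d) (Fin d) ℝ → ℝ := fun X => G ((2⁻¹ : ℝ) • (X + Xᵀ)) with hN
  have hsymmize : ∀ X : Matrix (Fin d) (Fin d) ℝ, ((2⁻¹ : ℝ) • (X + Xᵀ)).IsSymm := by
    intro X
    simp [Matrix.IsSymm, Matrix.transpose_smul, Matrix.transpose_add, add_comm]
  have hNsymm : ∀ A : Matrix (Fin d) (Fin d) ℝ, A.IsSymm → N A = G A := by
    intro A hA
    have h1 : (2⁻¹ : ℝ) • (A + Aᵀ) = A := by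
      rw [hA, ← two_smul ℝ A, smul_smul]
      norm_num
    rw [hN]; simp only []; rw [h1]
  have N_hom : ∀ c : ℝ, 0 < c → ∀ X, N (c • X) = c * N X := by
    intro c hc X
    have h1 : (2⁻¹ : ℝ) • (c • X + (c • X)ᵀ) = c • ((2⁻¹ : ℝ) • (X + Xᵀ)) := by
      rw [Matrix.transpose_smul, ← smul_add, smul_smul, smul_smul]
      ring_nf
    rw [hN]; simp only []
    rw [h1, hposhom c hc.le _ (hsymmize X)]
  have N_add : ∀ X Y, N (X + Y) ≤ N X + N Y := by
    intro X Y
    have h1 : (2⁻¹ : ℝ) • (X + Y + (X + Y)ᵀ) =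
        (2⁻¹ : ℝ) • (X + Xᵀ) + (2⁻¹ : ℝ) • (Y + Yᵀ) := by
      rw [Matrix.transpose_add, ← smul_add]
      congr 1
      abel
    rw [hN]; simp only []
    rw [h1]
    exact hsubadd _ _ (hsymmize X) (hsymmize Y)
  -- key: supporting functionals via Hahn-Banach
  have key : ∀ A₀ : Matrix (Fin d) (Fin d) ℝ, A₀.IsSymm →
      ∃ g : Matrix (Fin d) (Fin d) ℝ →ₗ[ℝ] ℝ, g A₀ = G A₀ ∧ ∀ X, g X ≤ N X := by
    intro A₀ hA₀
    by_cases h0 : A₀ = 0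
    · obtain ⟨g, -, hg⟩ := exists_extension_of_le_sublinear
        ⟨⊥, 0⟩ N N_hom N_add
        (fun x => by
          obtain ⟨x, hx⟩ := x
          have hx0 : x = 0 := by simpa using hx
          subst hx0
          simp only [LinearPMap.mk_apply, LinearMap.zero_apply]
          rw [hNsymm 0 h00, hG0])
      exact ⟨g, by simp [h0, map_zero, hG0], hg⟩
    · have hGneg : -G (-A₀) ≤ G A₀ := by
        have h1 := hsubadd A₀ (-A₀) hA₀ hA₀.neg
        simp only [add_neg_cancel, hG0] at h1
        linarith
      obtain ⟨g, hge, hg⟩ := exists_extension_of_le_sublinear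
        (LinearPMap.mkSpanSingleton A₀ (G A₀) h0) N N_hom N_add
        (fun x => by
          obtain ⟨x, hx⟩ := x
          have hx' : ∃ c : ℝ, c • A₀ = x := Submodule.mem_span_singleton.1 hx
          obtain ⟨c, rfl⟩ := hx'
          rw [LinearPMap.mkSpanSingleton'_apply]
          rcases le_or_gt 0 c with hc | hc
          · rw [hNsymm _ (hA₀.smul c), hposhom c hc _ hA₀]
            simp [smul_eq_mul]
          · have hcs : c • A₀ = (-c) • (-A₀) := by simp
            rw [hNsymm _ (hA₀.smul c), hcs, hposhom (-c) (by linarith) _ hA₀.neg]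
            simp only [smul_eq_mul, RingHom.id_apply]
            nlinarith)
      refine ⟨g, ?_, hg⟩
      have h2 := hge ⟨A₀, Submodule.mem_span_singleton_self A₀⟩
      rw [h2, LinearPMap.mkSpanSingleton_apply]
  -- from a functional, build a representing matrix
  have build : ∀ g : Matrix (Fin d) (Fin d) ℝ →ₗ[ℝ] ℝ,
      ∃ γ : Matrix (Fin d) (Fin d) ℝ, γ.IsSymm ∧
        ∀ A : Matrix (Fin d) (Fin d) ℝ, A.IsSymm → (γ * A).trace = 2 * g A := by
    intro g
    set γ : Matrix (Fin d) (Fin d) ℝ := Matrix.of fun i j =>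
      g (Matrix.single i j 1) + g (Matrix.single j i 1) with hγ
    have hγs : γ.IsSymm := by
      rw [Matrix.IsSymm]
      ext i j
      simp [hγ, Matrix.transpose_apply, add_comm]
    refine ⟨γ, hγs, ?_⟩
    intro A hA
    have hAsym : ∀ i j, A j i = A i j := hA.apply
    have hgA : g A = ∑ i, ∑ j, A i j * g (Matrix.single i j 1) := by
      conv_lhs => rw [Matrix.matrix_eq_sum_single A]
      rw [map_sum]
      refine Finset.sum_congr rfl fun i _ => ?_
      rw [map_sum]
      refine Finset.sum_congr rfl fun j _ => ?_
      have h1 : Matrix.single i j (A i j) = (A i j) • Matrix.single i j (1:ℝ) := by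
        rw [Matrix.smul_single]; simp
      rw [h1, LinearMap.map_smul, smul_eq_mul]
    have swap : (∑ i, ∑ k, A k i * g (Matrix.single k i 1))
        = ∑ i, ∑ k, A i k * g (Matrix.single i k 1) := Finset.sum_comm
    have step : (γ * A).trace = (∑ i, ∑ k, A i k * g (Matrix.single i k 1))
        + ∑ i, ∑ k, A k i * g (Matrix.single k i 1) := by
      rw [aux_dot_eq_trace]
      rw [← Finset.sum_add_distrib]
      refine Finset.sum_congr rfl fun i _ => ?_
      rw [← Finset.sum_add_distrib]
      refine Finset.sum_congr rfl fun k _ => ?_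
      rw [hγ]
      simp only [Matrix.of_apply]
      rw [hAsym i k]
      ring
    rw [step, swap, hgA]
    ring
  -- the set Γ
  set Γ : Set (Matrix (Fin d) (Fin d) ℝ) :=
    {γ | γ.IsSymm ∧ ∀ A : Matrix (Fin d) (Fin d) ℝ, A.IsSymm → (γ * A).trace ≤ 2 * G A}
    with hΓ
  -- membership of the supporting matrices
  have mem_of : ∀ A₀ : Matrix (Fin d) (Fin d) ℝ, A₀.IsSymm →
      ∃ γ ∈ Γ, (γ * A₀).trace = 2 * G A₀ := by
    intro A₀ hA₀
    obtain ⟨g, hgA₀, hgle⟩ := key A₀ hA₀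
    obtain ⟨γ, hγs, hγtr⟩ := build g
    refine ⟨γ, ⟨hγs, fun A hA => ?_⟩, by rw [hγtr A₀ hA₀, hgA₀]⟩
    rw [hγtr A hA]
    have h1 := hgle A
    rw [hNsymm A hA] at h1
    linarith
  refine ⟨Γ, ?_, ?_, ?_, ?_, ?_⟩
  · -- symmetric and PSD
    rintro γ ⟨hγs, hγle⟩
    refine ⟨hγs, Matrix.PosSemidef.of_dotProduct_mulVec_nonneg (aux_isHermitian_of_isSymm hγs) fun x => ?_⟩
    set M : Matrix (Fin d) (Fin d) ℝ := Matrix.of fun i j => x i * x j with hM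
    have hMs : M.IsSymm := by
      rw [Matrix.IsSymm]; ext i j; simp [hM, Matrix.transpose_apply, mul_comm]
    have hMpsd : (0 - -M).PosSemidef := by
      rw [zero_sub, neg_neg]
      refine Matrix.PosSemidef.of_dotProduct_mulVec_nonneg (aux_isHermitian_of_isSymm hMs) fun y => ?_
      have h1 : dotProduct (star y) (M *ᵥ y) = (∑ i, x i * y i) ^ 2 := by
        simp only [star_trivial, aux_quad]
        rw [sq, Finset.sum_mul_sum]
        refine Finset.sum_congr rfl fun i _ => Finset.sum_congr rfl fun k _ => ?_
        simp only [hM, Matrix.of_apply]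
        ring
      rw [h1]
      positivity
    have hGneg : G (-M) ≤ 0 := by
      have h1 := hmono 0 (-M) h00 hMs.neg hMpsd
      linarith [hG0]
    have htr := hγle (-M) hMs.neg
    have htrM : (γ * (-M)).trace = -(γ * M).trace := by
      rw [Matrix.mul_neg, Matrix.trace_neg]
    have hquad : dotProduct (star x) (γ *ᵥ x) = (γ * M).trace := by
      simp only [star_trivial, aux_quad, aux_dot_eq_trace]
      refine Finset.sum_congr rfl fun i _ => Finset.sum_congr rfl fun k _ => ?_
      simp only [hM, Matrix.of_apply]
      ring
    rw [hquad]
    rw [htrM] at htr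
    linarith
  · -- boundedness
    refine ⟨G ((2:ℝ) • (1 : Matrix (Fin d) (Fin d) ℝ)), ?_⟩
    rintro γ ⟨hγs, hγle⟩ i j
    set B : Matrix (Fin d) (Fin d) ℝ :=
      Matrix.single i j 1 + Matrix.single j i 1 with hB
    have hBs : B.IsSymm := aux_B_isSymm i j
    have h2Is : ((2:ℝ) • (1 : Matrix (Fin d) (Fin d) ℝ)).IsSymm := by
      simp [Matrix.IsSymm]
    have htrB : (γ * B).trace = γ i j + γ i j := by
      rw [hB, Matrix.mul_add, Matrix.trace_add, aux_trace_mul_std, aux_trace_mul_std,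
        hγs.apply i j]
    have hpsd1 : ((2:ℝ) • (1 : Matrix (Fin d) (Fin d) ℝ) - B).PosSemidef := by
      have h := aux_psd i j 1 (Or.inl rfl)
      rwa [← hB, one_smul] at h
    have hpsd2 : ((2:ℝ) • (1 : Matrix (Fin d) (Fin d) ℝ) - (-B)).PosSemidef := by
      have h := aux_psd i j (-1) (Or.inr rfl)
      rwa [← hB, neg_one_smul] at h
    have hb1 : G B ≤ G ((2:ℝ) • (1 : Matrix (Fin d) (Fin d) ℝ)) :=
      hmono _ B h2Is hBs hpsd1
    have hb2 : G (-B) ≤ G ((2:ℝ) • (1 : Matrix (Fin d) (Fin d) ℝ)) :=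
      hmono _ (-B) h2Is hBs.neg hpsd2
    have hle1 := hγle B hBs
    have hle2 := hγle (-B) hBs.neg
    rw [htrB] at hle1
    rw [Matrix.mul_neg, Matrix.trace_neg, htrB] at hle2
    rw [abs_le]
    constructor <;> linarith
  · -- closed
    have hEq : Γ = {γ : Matrix (Fin d) (Fin d) ℝ | γᵀ = γ} ∩
        ⋂ (A : Matrix (Fin d) (Fin d) ℝ) (_ : A.IsSymm),
          {γ : Matrix (Fin d) (Fin d) ℝ | (γ * A).trace ≤ 2 * G A} := by
      rw [hΓ]
      ext γ
      simp [Matrix.IsSymm, Set.mem_iInter]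
    rw [hEq]
    refine IsClosed.inter (isClosed_eq continuous_id.matrix_transpose continuous_id) ?_
    refine isClosed_iInter fun A => isClosed_iInter fun _ => ?_
    exact isClosed_le ((continuous_id.matrix_mul continuous_const).matrix_trace) continuous_const
  · -- convex
    rintro γ ⟨hγs, hγle⟩ δ ⟨hδs, hδle⟩ a b ha hb hab
    constructor
    · exact (hγs.smul a).add (hδs.smul b)
    · intro A hA
      have h1 : ((a • γ + b • δ) * A).trace = a * (γ * A).trace + b * (δ * A).trace := by
        rw [Matrix.add_mul, Matrix.smul_mul, Matrix.smul_mul, Matrix.trace_add,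
          Matrix.trace_smul, Matrix.trace_smul]
        simp [smul_eq_mul]
      rw [h1]
      have h2 := hγle A hA
      have h3 := hδle A hA
      have h4 : a * (2 * G A) + b * (2 * G A) = 2 * G A := by rw [← add_mul, hab, one_mul]
      linarith [mul_le_mul_of_nonneg_left h2 ha, mul_le_mul_of_nonneg_left h3 hb]
  · -- representation
    intro A hA
    obtain ⟨γ₀, hγ₀Γ, hγ₀tr⟩ := mem_of A hA
    have hne : ((fun γ : Matrix (Fin d) (Fin d) ℝ => (γ * A).trace) '' Γ).Nonempty :=
      ⟨(γ₀ * A).trace, ⟨γ₀, hγ₀Γ, rfl⟩⟩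
    have hbdd : ∀ x ∈ (fun γ : Matrix (Fin d) (Fin d) ℝ => (γ * A).trace) '' Γ,
        x ≤ 2 * G A := by
      rintro x ⟨γ, ⟨hγs, hγle⟩, rfl⟩
      exact hγle A hA
    have h1 : sSup ((fun γ : Matrix (Fin d) (Fin d) ℝ => (γ * A).trace) '' Γ) = 2 * G A := by
      refine le_antisymm (csSup_le hne hbdd) ?_
      rw [← hγ₀tr]
      exact le_csSup ⟨2 * G A, hbdd⟩ ⟨γ₀, hγ₀Γ, rfl⟩
    rw [h1]; ring
end
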